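/- For each c ∈ (0,1), the two attractors T(c) = A(c,P₁) for P₁ ∈ 𝒫₄ and O(c) = A(c,P₂) for P₂ ∈ 𝒫₆∖𝒫₄ are distinct: the point v₁/(1-c) belongs to T(c) but not to O(c). Moreover A(c,P) depends only on whether P ∈ 𝒫₄ or P ∈ 𝒫₆∖𝒫₄, so the set {A(c,P) : P ∈ 𝒫₆} has exactly 2 elements. -/

import Mathlib

/- STATEMENT 13: For each c ∈ (0,1), if T(c) is the attractor for P₁ ∈ 𝒫₄ and O(c) is the
attractor for P₂ ∈ 𝒫₆∖𝒫₄, then v₁/(1-c) ∈ T(c), v₁/(1-c) ∉ O(c), hence T(c) ≠ O(c);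
moreover the set {A(c,P) : P ∈ 𝒫₆} has exactly 2 elements. -/
noncomputable section
open Matrix
open scoped RealInnerProductSpace

abbrev E3 := EuclideanSpace ℝ (Fin 3)

def vtx : Fin 4 → E3 :=
  ![!₂[1, -1, 1], !₂[-1, 1, 1], !₂[-1, -1, -1], !₂[1, 1, -1]]

/-- The other four vertices of the cube `[-1,1]³`. -/
def vtx' : Fin 4 → E3 :=
  ![!₂[1, 1, 1], !₂[-1, -1, 1], !₂[1, -1, -1], !₂[-1, 1, -1]]

/-- The cube `C₀ = [-1,1]³`. -/
def C0 : Set E3 := {x | ∀ i, x i ∈ Set.Icc (-1 : ℝ) 1}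

/-- The regular tetrahedron `T₀` with vertices `v₁, v₂, v₃, v₄`. -/
def T0 : Set E3 := convexHull ℝ (Set.range vtx)

/-- Membership in the hexahedral group `𝒫₆`: rotations preserving the cube `C₀`. -/
def memP6 (Q : Matrix (Fin 3) (Fin 3) ℝ) : Prop :=
  Q ∈ Matrix.specialOrthogonalGroup (Fin 3) ℝ ∧ Matrix.toEuclideanLin Q '' C0 = C0

/-- Membership in the tetrahedral group `𝒫₄`: rotations preserving the tetrahedron `T₀`. -/
def memP4 (Q : Matrix (Fin 3) (Fin 3) ℝ) : Prop :=
  Q ∈ Matrix.specialOrthogonalGroup (Fin 3) ℝ ∧ Matrix.toEuclideanLin Q '' T0 = T0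

def fmap (c : ℝ) (P : Matrix (Fin 3) (Fin 3) ℝ) (i : Fin 4) (x : E3) : E3 :=
  c • Matrix.toEuclideanLin P x + vtx i

def IsAttractor (c : ℝ) (P : Matrix (Fin 3) (Fin 3) ℝ) (A : Set E3) : Prop :=
  A.Nonempty ∧ IsCompact A ∧ A = ⋃ i : Fin 4, fmap c P i '' A

lemma inner_E3 (x y : E3) : ⟪x, y⟫ = x 0 * y 0 + x 1 * y 1 + x 2 * y 2 := by
  simp [PiLp.inner_apply, RCLike.inner_apply, Fin.sum_univ_three]
  ring

lemma inn_vv : ∀ i j, ⟪vtx i, vtx j⟫ = 3 ∨ ⟪vtx i, vtx j⟫ = -1 := by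
  intro i j; fin_cases i <;> fin_cases j <;> simp only [inner_E3] <;> simp [inner_E3, vtx, Fin.sum_univ_three] <;> norm_num

lemma inn_vv' : ∀ i j, ⟪vtx i, vtx' j⟫ = 1 ∨ ⟪vtx i, vtx' j⟫ = -3 := by
  intro i j; fin_cases i <;> fin_cases j <;> simp [inner_E3, vtx, vtx', Fin.sum_univ_three] <;> norm_num

lemma inn_v'v' : ∀ i j, ⟪vtx' i, vtx' j⟫ = 3 ∨ ⟪vtx' i, vtx' j⟫ = -1 := by
  intro i j; fin_cases i <;> fin_cases j <;> simp only [inner_E3] <;> simp [inner_E3, vtx', Fin.sum_univ_three] <;> norm_num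

lemma inn_self (i) : ⟪vtx i, vtx i⟫ = 3 := by
  fin_cases i <;> simp only [inner_E3] <;> simp [inner_E3, vtx, Fin.sum_univ_three] <;> norm_num

lemma inn_self' (i) : ⟪vtx' i, vtx' i⟫ = 3 := by
  fin_cases i <;> simp only [inner_E3] <;> simp [inner_E3, vtx', Fin.sum_univ_three] <;> norm_num

lemma adj (P : Matrix (Fin 3) (Fin 3) ℝ) (x y : E3) :
    ⟪x, toEuclideanLin P y⟫ = ⟪toEuclideanLin Pᵀ x, y⟫ := by
  simp [inner_E3, toEuclideanLin_apply, Matrix.mulVec, dotProduct, Fin.sum_univ_three,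
    Matrix.transpose_apply]
  ring

lemma toEuclideanLin_mul' (A B : Matrix (Fin 3) (Fin 3) ℝ) :
    toEuclideanLin (A * B) = (toEuclideanLin A).comp (toEuclideanLin B) := by
  simp [toEuclideanLin_eq_toLin, Matrix.toLin_mul _ (PiLp.basisFun 2 ℝ (Fin 3)) _]

lemma toEuclideanLin_one' : (toEuclideanLin (1 : Matrix (Fin 3) (Fin 3) ℝ)) = LinearMap.id := by
  simp [toEuclideanLin_eq_toLin]

lemma so3_inner {P : Matrix (Fin 3) (Fin 3) ℝ}
    (hP : P ∈ Matrix.specialOrthogonalGroup (Fin 3) ℝ) (x y : E3) :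
    ⟪toEuclideanLin P x, toEuclideanLin P y⟫ = ⟪x, y⟫ := by
  rw [real_inner_comm, adj]
  have h1 : Pᵀ * P = 1 := by
    have := (Matrix.mem_specialOrthogonalGroup_iff.mp hP).1
    rw [Matrix.mem_orthogonalGroup_iff'] at this
    simpa using this
  have : toEuclideanLin Pᵀ (toEuclideanLin P y) = y := by
    rw [← LinearMap.comp_apply, ← toEuclideanLin_mul', h1, toEuclideanLin_one']; rfl
  rw [this, real_inner_comm]

lemma so3_norm {P : Matrix (Fin 3) (Fin 3) ℝ}
    (hP : P ∈ Matrix.specialOrthogonalGroup (Fin 3) ℝ) (x : E3) :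
    ‖toEuclideanLin P x‖ = ‖x‖ := by
  have := so3_inner hP x x
  rw [real_inner_self_eq_norm_sq, real_inner_self_eq_norm_sq] at this
  nlinarith [norm_nonneg (toEuclideanLin P x), norm_nonneg x]

lemma norm_vtx (i) : ‖vtx i‖ = Real.sqrt 3 := by
  have h := inn_self i
  rw [real_inner_self_eq_norm_sq] at h
  rw [← h, Real.sqrt_sq (norm_nonneg _)]

lemma vtx_mem_T0 (i) : vtx i ∈ T0 := subset_convexHull ℝ _ ⟨i, rfl⟩

lemma T0_sphere : {x | x ∈ T0 ∧ ⟪x, x⟫ = 3} = Set.range vtx := by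
  apply Set.eq_of_subset_of_subset
  · rintro x ⟨hxT, hx3⟩
    have hfin : (Set.range vtx).Finite := Set.finite_range vtx
    rw [T0, hfin.convexHull_eq] at hxT
    obtain ⟨w, hw0, hw1, hwx⟩ := hxT
    rw [Finset.centerMass_eq_of_sum_1 _ _ hw1] at hwx
    simp only [id_eq] at hwx
    have hnx : ‖x‖ = Real.sqrt 3 := by
      rw [show ‖x‖ = Real.sqrt (‖x‖^2) by rw [Real.sqrt_sq (norm_nonneg _)],
        ← real_inner_self_eq_norm_sq, hx3]
    have hip : ∀ y ∈ hfin.toFinset, ⟪y, x⟫ ≤ 3 := by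
      intro y hy
      rw [Set.Finite.mem_toFinset] at hy
      obtain ⟨i, rfl⟩ := hy
      calc ⟪vtx i, x⟫ ≤ ‖vtx i‖ * ‖x‖ := real_inner_le_norm _ _
        _ = 3 := by rw [norm_vtx, hnx, ← Real.sqrt_mul_self (by norm_num : (3:ℝ) ≥ 0)]; norm_num [Real.sqrt_mul_self]
    have hinner : ∑ y ∈ hfin.toFinset, w y * ⟪y, x⟫ = 3 := by
      have hsum : ⟪(∑ y ∈ hfin.toFinset, w y • y : E3), x⟫
          = ∑ y ∈ hfin.toFinset, w y * ⟪y, x⟫ := by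
        rw [sum_inner]
        exact Finset.sum_congr rfl fun y _ => real_inner_smul_left y x (w y)
      rw [← hsum, hwx, hx3]
    have hzero : ∑ y ∈ hfin.toFinset, w y * (3 - ⟪y, x⟫) = 0 := by
      have : ∑ y ∈ hfin.toFinset, w y * (3 - ⟪y, x⟫)
          = (∑ y ∈ hfin.toFinset, w y) * 3 - ∑ y ∈ hfin.toFinset, w y * ⟪y, x⟫ := by
        rw [Finset.sum_mul, ← Finset.sum_sub_distrib]
        exact Finset.sum_congr rfl fun y _ => by ring
      rw [this, hw1, hinner]; ring
    obtain ⟨y, hy, hwy⟩ : ∃ y ∈ hfin.toFinset, w y ≠ 0 := by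
      by_contra h
      push_neg at h
      rw [Finset.sum_eq_zero h] at hw1; norm_num at hw1
    have hally : ∀ y ∈ hfin.toFinset, w y * (3 - ⟪y, x⟫) = 0 := by
      refine (Finset.sum_eq_zero_iff_of_nonneg ?_).mp hzero
      intro z hz
      have h1 := hw0 z (by rwa [Set.Finite.mem_toFinset] at hz)
      have h2 := hip z hz
      nlinarith
    have hy3 : ⟪y, x⟫ = 3 := by
      have := hally y hy
      rcases mul_eq_zero.mp this with h | h
      · exact absurd h hwy
      · linarith
    have hyy : ⟪y, y⟫ = 3 := by
      rw [Set.Finite.mem_toFinset] at hy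
      obtain ⟨i, rfl⟩ := hy; exact inn_self i
    have : x = y := by
      have hxy : ‖x - y‖^2 = 0 := by
        rw [norm_sub_sq_real, ← real_inner_self_eq_norm_sq, ← real_inner_self_eq_norm_sq,
          hx3, hyy, real_inner_comm, hy3]; ring
      have := pow_eq_zero_iff (n := 2) (by norm_num) |>.mp hxy
      rw [norm_eq_zero] at this
      exact sub_eq_zero.mp this
    rw [Set.Finite.mem_toFinset] at hy
    rwa [this]
  · rintro x ⟨i, rfl⟩
    exact ⟨vtx_mem_T0 i, inn_self i⟩

lemma vtx_mem_C0 (i) : vtx i ∈ C0 := by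
  intro j; fin_cases i <;> fin_cases j <;> norm_num [vtx, C0]

lemma vtx'_mem_C0 (i) : vtx' i ∈ C0 := by
  intro j; fin_cases i <;> fin_cases j <;> norm_num [vtx', C0]

lemma C0_sphere : {x | x ∈ C0 ∧ ⟪x, x⟫ = 3} = Set.range vtx ∪ Set.range vtx' := by
  apply Set.eq_of_subset_of_subset
  · rintro x ⟨hxC, hx3⟩
    rw [inner_E3] at hx3
    have h0 := hxC 0
    have h1 := hxC 1
    have h2 := hxC 2
    simp only [Set.mem_Icc] at h0 h1 h2
    have e0 : x 0 = 1 ∨ x 0 = -1 := by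
      rcases mul_self_eq_one_iff.mp (by nlinarith : x 0 * x 0 = 1) with h | h
      exacts [Or.inl h, Or.inr h]
    have e1 : x 1 = 1 ∨ x 1 = -1 := by
      rcases mul_self_eq_one_iff.mp (by nlinarith : x 1 * x 1 = 1) with h | h
      exacts [Or.inl h, Or.inr h]
    have e2 : x 2 = 1 ∨ x 2 = -1 := by
      rcases mul_self_eq_one_iff.mp (by nlinarith : x 2 * x 2 = 1) with h | h
      exacts [Or.inl h, Or.inr h]
    have hx : ∀ (y : E3), x 0 = y 0 → x 1 = y 1 → x 2 = y 2 → x = y := by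
      intro y a b c
      ext j
      fin_cases j <;> assumption
    rcases e0 with e0 | e0 <;> rcases e1 with e1 | e1 <;> rcases e2 with e2 | e2
    · exact Or.inr ⟨0, (hx (vtx' 0) (by simp [vtx', e0]) (by simp [vtx', e1]) (by simp [vtx', e2])).symm⟩
    · exact Or.inl ⟨3, (hx (vtx 3) (by simp [vtx, e0]) (by simp [vtx, e1]) (by simp [vtx, e2])).symm⟩
    · exact Or.inl ⟨0, (hx (vtx 0) (by simp [vtx, e0]) (by simp [vtx, e1]) (by simp [vtx, e2])).symm⟩
    · exact Or.inr ⟨2, (hx (vtx' 2) (by simp [vtx', e0]) (by simp [vtx', e1]) (by simp [vtx', e2])).symm⟩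
    · exact Or.inl ⟨1, (hx (vtx 1) (by simp [vtx, e0]) (by simp [vtx, e1]) (by simp [vtx, e2])).symm⟩
    · exact Or.inr ⟨3, (hx (vtx' 3) (by simp [vtx', e0]) (by simp [vtx', e1]) (by simp [vtx', e2])).symm⟩
    · exact Or.inr ⟨1, (hx (vtx' 1) (by simp [vtx', e0]) (by simp [vtx', e1]) (by simp [vtx', e2])).symm⟩
    · exact Or.inl ⟨2, (hx (vtx 2) (by simp [vtx, e0]) (by simp [vtx, e1]) (by simp [vtx, e2])).symm⟩
  · rintro x (⟨i, rfl⟩ | ⟨i, rfl⟩)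
    exacts [⟨vtx_mem_C0 i, inn_self i⟩, ⟨vtx'_mem_C0 i, inn_self' i⟩]

lemma vtx_ne_vtx' (i j) : vtx i ≠ vtx' j := by
  intro h
  have h1 := inn_vv' i j
  rw [← h, inn_self] at h1
  rcases h1 with h1 | h1 <;> norm_num at h1

lemma memP4_imageV {P} (h : memP4 P) :
    toEuclideanLin P '' (Set.range vtx) = Set.range vtx := by
  have hsph := T0_sphere
  apply Set.eq_of_subset_of_subset
  · rintro x ⟨v, ⟨i, rfl⟩, rfl⟩
    rw [← hsph]
    exact ⟨h.2 ▸ ⟨vtx i, vtx_mem_T0 i, rfl⟩, by rw [so3_inner h.1, inn_self]⟩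
  · rintro v ⟨i, rfl⟩
    have : vtx i ∈ toEuclideanLin P '' T0 := h.2.symm ▸ vtx_mem_T0 i
    obtain ⟨u, huT, hu⟩ := this
    have : u ∈ Set.range vtx := by
      rw [← hsph]
      refine ⟨huT, ?_⟩
      rw [← so3_inner h.1, hu, inn_self]
    exact ⟨u, this, hu⟩

lemma memP6_imageW {P} (h : memP6 P) :
    toEuclideanLin P '' (Set.range vtx ∪ Set.range vtx')
      = Set.range vtx ∪ Set.range vtx' := by
  have hsph := C0_sphere
  apply Set.eq_of_subset_of_subset
  · rintro x ⟨v, hv, rfl⟩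
    rw [← hsph]
    have hv3 : ⟪v, v⟫ = 3 := by
      rcases hv with ⟨i, rfl⟩ | ⟨i, rfl⟩
      exacts [inn_self i, inn_self' i]
    have hvC : v ∈ C0 := by
      rcases hv with ⟨i, rfl⟩ | ⟨i, rfl⟩
      exacts [vtx_mem_C0 i, vtx'_mem_C0 i]
    exact ⟨h.2 ▸ ⟨v, hvC, rfl⟩, by rw [so3_inner h.1, hv3]⟩
  · intro v hv
    have hv3 : ⟪v, v⟫ = 3 := by
      rcases hv with ⟨i, rfl⟩ | ⟨i, rfl⟩
      exacts [inn_self i, inn_self' i]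
    have hvC : v ∈ C0 := by
      rcases hv with ⟨i, rfl⟩ | ⟨i, rfl⟩
      exacts [vtx_mem_C0 i, vtx'_mem_C0 i]
    have : v ∈ toEuclideanLin P '' C0 := h.2.symm ▸ hvC
    obtain ⟨u, huC, hu⟩ := this
    have : u ∈ Set.range vtx ∪ Set.range vtx' := by
      rw [← hsph]
      exact ⟨huC, by rw [← so3_inner h.1, hu, hv3]⟩
    exact ⟨u, this, hu⟩

lemma imageV_memP4 {P} (hP : P ∈ Matrix.specialOrthogonalGroup (Fin 3) ℝ)
    (h : toEuclideanLin P '' (Set.range vtx) = Set.range vtx) : memP4 P := by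
  refine ⟨hP, ?_⟩
  rw [T0, LinearMap.image_convexHull, h]

lemma P6smP4_image {P} (h6 : memP6 P) (h4 : ¬ memP4 P) :
    toEuclideanLin P '' (Set.range vtx) = Set.range vtx' ∧
    toEuclideanLin P '' (Set.range vtx') = Set.range vtx := by
  set L := toEuclideanLin P with hLdef
  have hW := memP6_imageW h6
  have hinn := so3_inner h6.1
  have hmem : ∀ i, L (vtx i) ∈ Set.range vtx ∪ Set.range vtx' := by
    intro i
    rw [← hW]; exact ⟨vtx i, Or.inl ⟨i, rfl⟩, rfl⟩
  have hmem' : ∀ i, L (vtx' i) ∈ Set.range vtx ∪ Set.range vtx' := by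
    intro i
    rw [← hW]; exact ⟨vtx' i, Or.inr ⟨i, rfl⟩, rfl⟩
  -- L (vtx 0) cannot be in range vtx, else memP4 P
  have hv0 : L (vtx 0) ∈ Set.range vtx' := by
    rcases hmem 0 with ⟨k, hk⟩ | h
    · -- show memP4 P, contradiction
      exfalso
      apply h4
      apply imageV_memP4 h6.1
      -- L '' V ⊆ V
      have hsub : L '' (Set.range vtx) ⊆ Set.range vtx := by
        rintro x ⟨v, ⟨i, rfl⟩, rfl⟩
        rcases hmem i with hi | ⟨j, hj⟩
        · exact hi
        · exfalso
          have e1 : ⟪L (vtx i), L (vtx 0)⟫ = ⟪vtx i, vtx 0⟫ := hinn _ _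
          rw [← hj, ← hk] at e1
          have hcm : ⟪vtx' j, vtx k⟫ = ⟪vtx k, vtx' j⟫ := real_inner_comm _ _
          rw [hcm] at e1
          rcases inn_vv' k j with h' | h' <;> rcases inn_vv i 0 with h'' | h'' <;>
            rw [h', h''] at e1 <;> norm_num at e1
      have hsub' : L '' (Set.range vtx') ⊆ Set.range vtx' := by
        rintro x ⟨v, ⟨i, rfl⟩, rfl⟩
        rcases hmem' i with ⟨j, hj⟩ | hi
        · exfalso
          have e1 : ⟪L (vtx' i), L (vtx 0)⟫ = ⟪vtx' i, vtx 0⟫ := hinn _ _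
          rw [← hj, ← hk] at e1
          have hcm : ⟪vtx' i, vtx 0⟫ = ⟪vtx 0, vtx' i⟫ := real_inner_comm _ _
          rw [hcm] at e1
          rcases inn_vv j k with h' | h' <;> rcases inn_vv' 0 i with h'' | h'' <;>
            rw [h', h''] at e1 <;> norm_num at e1
        · exact hi
      apply Set.eq_of_subset_of_subset hsub
      intro v hv
      have : v ∈ L '' (Set.range vtx) ∪ L '' (Set.range vtx') := by
        rw [← Set.image_union, hW]; exact Or.inl hv
      rcases this with h | h
      · exact h
      · exfalso
        obtain ⟨i, hi⟩ := hv
        obtain ⟨j, hj⟩ := hsub' h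
        exact vtx_ne_vtx' i j (hi.trans hj.symm)
    · exact h
  obtain ⟨k, hk⟩ := hv0
  -- L '' V ⊆ V'
  have hsub : L '' (Set.range vtx) ⊆ Set.range vtx' := by
    rintro x ⟨v, ⟨i, rfl⟩, rfl⟩
    rcases hmem i with ⟨j, hj⟩ | hi
    · exfalso
      have e1 : ⟪L (vtx i), L (vtx 0)⟫ = ⟪vtx i, vtx 0⟫ := hinn _ _
      rw [← hj, ← hk] at e1
      rcases inn_vv' j k with h' | h' <;> rcases inn_vv i 0 with h'' | h'' <;>
        rw [h', h''] at e1 <;> norm_num at e1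
    · exact hi
  -- L '' V' ⊆ V
  have hsub' : L '' (Set.range vtx') ⊆ Set.range vtx := by
    rintro x ⟨v, ⟨i, rfl⟩, rfl⟩
    rcases hmem' i with hi | ⟨j, hj⟩
    · exact hi
    · exfalso
      have e1 : ⟪L (vtx' i), L (vtx 0)⟫ = ⟪vtx' i, vtx 0⟫ := hinn _ _
      rw [← hj, ← hk] at e1
      have hcm : ⟪vtx' i, vtx 0⟫ = ⟪vtx 0, vtx' i⟫ := real_inner_comm _ _
      rw [hcm] at e1
      rcases inn_v'v' j k with h' | h' <;> rcases inn_vv' 0 i with h'' | h'' <;>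
        rw [h', h''] at e1 <;> norm_num at e1
  constructor
  · apply Set.eq_of_subset_of_subset hsub
    intro v hv
    have : v ∈ L '' (Set.range vtx) ∪ L '' (Set.range vtx') := by
      rw [← Set.image_union, hW]; exact Or.inr hv
    rcases this with h | h
    · exact h
    · exfalso
      obtain ⟨i, hi⟩ := hv
      obtain ⟨j, hj⟩ := hsub' h
      exact vtx_ne_vtx' j i (hj.trans hi.symm)
  · apply Set.eq_of_subset_of_subset hsub'
    intro v hv
    have : v ∈ L '' (Set.range vtx) ∪ L '' (Set.range vtx') := by
      rw [← Set.image_union, hW]; exact Or.inl hv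
    rcases this with h | h
    · exfalso
      obtain ⟨i, hi⟩ := hv
      obtain ⟨j, hj⟩ := hsub h
      exact vtx_ne_vtx' i j (hi.trans hj.symm)
    · exact h

def Lp (P : Matrix (Fin 3) (Fin 3) ℝ) : Module.End ℝ E3 := toEuclideanLin P

lemma Lp_pow_succ (P k) (x : E3) : (Lp P ^ (k+1)) x = (Lp P ^ k) (Lp P x) := by
  rw [pow_succ]; rfl

lemma Lp_pow_norm {P} (hP : P ∈ Matrix.specialOrthogonalGroup (Fin 3) ℝ) (k) (x : E3) :
    ‖(Lp P ^ k) x‖ = ‖x‖ := by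
  induction k generalizing x with
  | zero => simp
  | succ n ih => rw [Lp_pow_succ, ih, Lp]; exact so3_norm hP x

lemma Lp_pow_image {P} {k : ℕ} (s t u : Set E3) (h : Lp P '' s = t)
    (h2 : (Lp P ^ k) '' t = u) : (Lp P ^ (k+1)) '' s = u := by
  rw [← h2, ← h, ← Set.image_comp]
  apply Set.image_congr
  intro x _
  exact Lp_pow_succ P k x

def trm (c : ℝ) (P : Matrix (Fin 3) (Fin 3) ℝ) (σ : ℕ → Fin 4) (k : ℕ) : E3 :=
  c ^ k • (Lp P ^ k) (vtx (σ k))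

lemma trm_norm {P} (hP : P ∈ Matrix.specialOrthogonalGroup (Fin 3) ℝ) {c : ℝ} (hc0 : 0 < c)
    (σ) (k) : ‖trm c P σ k‖ = c ^ k * Real.sqrt 3 := by
  rw [trm, norm_smul, Lp_pow_norm hP, norm_vtx]
  congr 1
  rw [Real.norm_eq_abs, abs_of_pos (pow_pos hc0 k)]

lemma summable_trm {P} (hP : P ∈ Matrix.specialOrthogonalGroup (Fin 3) ℝ) {c : ℝ}
    (hc0 : 0 < c) (hc1 : c < 1) (σ) : Summable (trm c P σ) := by
  apply Summable.of_norm
  simp only [trm_norm hP hc0]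
  exact (summable_geometric_of_lt_one hc0.le hc1).mul_right _

def Phi (c : ℝ) (P : Matrix (Fin 3) (Fin 3) ℝ) (σ : ℕ → Fin 4) : E3 := ∑' k, trm c P σ k

lemma hasSum_trm {P} (hP : P ∈ Matrix.specialOrthogonalGroup (Fin 3) ℝ) {c : ℝ}
    (hc0 : 0 < c) (hc1 : c < 1) (σ) : HasSum (trm c P σ) (Phi c P σ) :=
  (summable_trm hP hc0 hc1 σ).hasSum

lemma tail_bound {P} (hP : P ∈ Matrix.specialOrthogonalGroup (Fin 3) ℝ) {c : ℝ}
    (hc0 : 0 < c) (hc1 : c < 1) (σ) (n : ℕ) :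
    ‖Phi c P σ - ∑ k ∈ Finset.range n, trm c P σ k‖ ≤ Real.sqrt 3 * c ^ n / (1 - c) := by
  have hsum := summable_trm hP hc0 hc1 σ
  have h1 : (∑ k ∈ Finset.range n, trm c P σ k) + ∑' k, trm c P σ (k + n) = Phi c P σ :=
    Summable.sum_add_tsum_nat_add n hsum
  have h2 : Phi c P σ - ∑ k ∈ Finset.range n, trm c P σ k = ∑' k, trm c P σ (k + n) := by
    rw [← h1, add_sub_cancel_left]
  rw [h2]
  have hsn : Summable (fun k => trm c P σ (k + n)) := hsum.comp_injective (add_left_injective n)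
  calc ‖∑' k, trm c P σ (k + n)‖ ≤ ∑' k, ‖trm c P σ (k + n)‖ := norm_tsum_le_tsum_norm
        (hsn.norm)
    _ = ∑' k : ℕ, c ^ (k + n) * Real.sqrt 3 := by
        congr 1; funext k; exact trm_norm hP hc0 σ (k + n)
    _ = Real.sqrt 3 * c ^ n / (1 - c) := by
        have : ∀ k : ℕ, c ^ (k + n) * Real.sqrt 3 = c ^ k * (c ^ n * Real.sqrt 3) := by
          intro k; rw [pow_add]; ring
        simp only [this]
        rw [tsum_mul_right, tsum_geometric_of_lt_one hc0.le hc1]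
        field_simp

def orbit (c : ℝ) (P : Matrix (Fin 3) (Fin 3) ℝ) : (ℕ → Fin 4) → ℕ → E3 → E3
  | _, 0, x => x
  | σ, n+1, x => fmap c P (σ 0) (orbit c P (fun k => σ (k+1)) n x)

lemma orbit_mem {c P A} (hA : IsAttractor c P A) (σ : ℕ → Fin 4) (n : ℕ) {x : E3}
    (hx : x ∈ A) : orbit c P σ n x ∈ A := by
  induction n generalizing σ with
  | zero => exact hx
  | succ n ih =>
    have h1 : orbit c P σ (n+1) x = fmap c P (σ 0) (orbit c P (fun k => σ (k+1)) n x) := rfl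
    rw [h1]
    have h2 : fmap c P (σ 0) (orbit c P (fun k => σ (k+1)) n x)
        ∈ fmap c P (σ 0) '' A := ⟨_, ih _, rfl⟩
    rw [hA.2.2]
    exact Set.mem_iUnion.mpr ⟨σ 0, h2⟩

lemma fmap_eq (c P i) (x : E3) : fmap c P i x = c • Lp P x + vtx i := rfl

lemma orbit_formula (c : ℝ) (P) (σ : ℕ → Fin 4) (n : ℕ) (x : E3) :
    orbit c P σ n x = (∑ k ∈ Finset.range n, trm c P σ k) + c ^ n • (Lp P ^ n) x := by
  induction n generalizing σ with
  | zero => simp [orbit]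
  | succ n ih =>
    have h1 : orbit c P σ (n+1) x = fmap c P (σ 0) (orbit c P (fun k => σ (k+1)) n x) := rfl
    rw [h1, ih, fmap_eq]
    rw [Finset.sum_range_succ']
    have key : ∀ y : E3, c • Lp P (c ^ n • (Lp P ^ n) y) = c ^ (n+1) • (Lp P ^ (n+1)) y := by
      intro y
      rw [_root_.map_smul, smul_smul, Lp_pow_succ]
      have : (Lp P ^ n) (Lp P y) = Lp P ((Lp P ^ n) y) := by
        rw [← Module.End.mul_apply, ← Module.End.mul_apply, ← pow_succ, ← pow_succ']
      rw [this, pow_succ]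
      ring_nf
    have htrm0 : trm c P σ 0 = vtx (σ 0) := by simp [trm]
    have htrm : ∀ k, c • Lp P (trm c P (fun j => σ (j+1)) k) = trm c P σ (k+1) := by
      intro k
      rw [trm, trm, _root_.map_smul, smul_smul]
      have : Lp P ((Lp P ^ k) (vtx (σ (k+1)))) = (Lp P ^ (k+1)) (vtx (σ (k+1))) := by
        rw [← Module.End.mul_apply, ← pow_succ']
      rw [this, pow_succ]
      ring_nf
    rw [map_add, smul_add, map_sum, Finset.smul_sum]
    have : ∀ k ∈ Finset.range n, c • Lp P (trm c P (fun j => σ (j+1)) k) = trm c P σ (k+1) :=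
      fun k _ => htrm k
    rw [Finset.sum_congr rfl this, htrm0, key x]
    abel

lemma attractor_subset_range {c P A} (hP : P ∈ Matrix.specialOrthogonalGroup (Fin 3) ℝ)
    (hc0 : 0 < c) (hc1 : c < 1) (hA : IsAttractor c P A) :
    Set.range (Phi c P) ⊆ A := by
  rintro x ⟨σ, rfl⟩
  obtain ⟨x₀, hx₀⟩ := hA.1
  have hmem : ∀ n, orbit c P σ n x₀ ∈ A := fun n => orbit_mem hA σ n hx₀
  have hten : Filter.Tendsto (fun n => orbit c P σ n x₀) Filter.atTop (nhds (Phi c P σ)) := by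
    rw [tendsto_iff_norm_sub_tendsto_zero]
    have hbound : ∀ n, ‖orbit c P σ n x₀ - Phi c P σ‖
        ≤ Real.sqrt 3 * c ^ n / (1 - c) + c ^ n * ‖x₀‖ := by
      intro n
      rw [orbit_formula]
      have : (∑ k ∈ Finset.range n, trm c P σ k) + c ^ n • (Lp P ^ n) x₀ - Phi c P σ
          = -(Phi c P σ - ∑ k ∈ Finset.range n, trm c P σ k) + c ^ n • (Lp P ^ n) x₀ := by
        abel
      rw [this]
      refine (norm_add_le _ _).trans ?_
      rw [norm_neg]
      gcongr
      · exact tail_bound hP hc0 hc1 σ n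
      · rw [norm_smul, Lp_pow_norm hP, Real.norm_eq_abs, abs_of_pos (pow_pos hc0 n)]
    have hlim : Filter.Tendsto (fun n : ℕ => Real.sqrt 3 * c ^ n / (1 - c) + c ^ n * ‖x₀‖)
        Filter.atTop (nhds 0) := by
      have hp : Filter.Tendsto (fun n : ℕ => c ^ n) Filter.atTop (nhds 0) :=
        tendsto_pow_atTop_nhds_zero_of_lt_one hc0.le hc1
      have := ((hp.const_mul (Real.sqrt 3)).div_const (1 - c)).add (hp.mul_const ‖x₀‖)
      simpa using this.congr (fun n => by ring)
    exact squeeze_zero (fun n => norm_nonneg _) hbound hlim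
  exact hA.2.1.isClosed.mem_of_tendsto hten (Filter.Eventually.of_forall hmem)

lemma range_subset_attractor {c P A} (hP : P ∈ Matrix.specialOrthogonalGroup (Fin 3) ℝ)
    (hc0 : 0 < c) (hc1 : c < 1) (hA : IsAttractor c P A) :
    A ⊆ Set.range (Phi c P) := by
  intro x hx
  -- choice function
  have hstep : ∀ z : {z : E3 // z ∈ A}, ∃ (i : Fin 4) (y : {z : E3 // z ∈ A}), z.1 = fmap c P i y.1 := by
    rintro ⟨z, hz⟩
    have : z ∈ ⋃ i : Fin 4, fmap c P i '' A := hA.2.2 ▸ hz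
    obtain ⟨i, y, hyA, hy⟩ := Set.mem_iUnion.mp this
    exact ⟨i, ⟨y, hyA⟩, hy.symm⟩
  choose g1 g2 hg using hstep
  let chain : ℕ → {z : E3 // z ∈ A} := fun n => Nat.recAux (⟨x, hx⟩ : {z : E3 // z ∈ A}) (fun _ z => g2 z) n
  let σ : ℕ → Fin 4 := fun n => g1 (chain n)
  have hchain : ∀ n, (chain n).1 = fmap c P (σ n) (chain (n+1)).1 := by
    intro n
    have : chain (n+1) = g2 (chain n) := rfl
    rw [this]
    exact hg (chain n)
  have key : ∀ n, x = (∑ k ∈ Finset.range n, trm c P σ k) + c ^ n • (Lp P ^ n) (chain n).1 := by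
    intro n
    induction n with
    | zero => simp [chain]
    | succ n ih =>
      rw [ih, hchain n, fmap_eq, Finset.sum_range_succ]
      have h1 : c ^ n • (Lp P ^ n) (c • Lp P (chain (n+1)).1 + vtx (σ n))
          = c ^ (n+1) • (Lp P ^ (n+1)) (chain (n+1)).1 + trm c P σ n := by
        have e1 : (Lp P ^ n) (c • Lp P (chain (n+1)).1 + vtx (σ n))
            = c • (Lp P ^ n) (Lp P (chain (n+1)).1) + (Lp P ^ n) (vtx (σ n)) := by
          rw [map_add, _root_.map_smul]
        have e2 : (Lp P ^ n) (Lp P (chain (n+1)).1) = (Lp P ^ (n+1)) (chain (n+1)).1 := by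
          rw [← Module.End.mul_apply, ← pow_succ]
        rw [e1, smul_add, smul_smul, e2, ← pow_succ]
        rfl
      rw [h1]
      abel
  obtain ⟨z, hzA, hz⟩ := hA.2.1.exists_isMaxOn hA.1 continuous_norm.continuousOn
  have hM : ∀ y : {z : E3 // z ∈ A}, ‖y.1‖ ≤ ‖z‖ := fun y => hz y.2
  have hten : Filter.Tendsto (fun n => ∑ k ∈ Finset.range n, trm c P σ k)
      Filter.atTop (nhds x) := by
    rw [tendsto_iff_norm_sub_tendsto_zero]
    have hbound : ∀ n, ‖(∑ k ∈ Finset.range n, trm c P σ k) - x‖ ≤ c ^ n * ‖z‖ := by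
      intro n
      have : (∑ k ∈ Finset.range n, trm c P σ k) - x = -(c ^ n • (Lp P ^ n) (chain n).1) := by
        rw [key n]; abel
      rw [this, norm_neg, norm_smul, Lp_pow_norm hP, Real.norm_eq_abs,
        abs_of_pos (pow_pos hc0 n)]
      exact mul_le_mul_of_nonneg_left (hM _) (pow_pos hc0 n).le
    have hlim : Filter.Tendsto (fun n : ℕ => c ^ n * ‖z‖) Filter.atTop (nhds 0) := by
      simpa using (tendsto_pow_atTop_nhds_zero_of_lt_one hc0.le hc1).mul_const ‖z‖
    exact squeeze_zero (fun n => norm_nonneg _) hbound hlim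
  have hten2 := (hasSum_trm hP hc0 hc1 σ).tendsto_sum_nat
  exact ⟨σ, tendsto_nhds_unique hten2 hten⟩

lemma attractor_eq_range {c P A} (hP : P ∈ Matrix.specialOrthogonalGroup (Fin 3) ℝ)
    (hc0 : 0 < c) (hc1 : c < 1) (hA : IsAttractor c P A) :
    A = Set.range (Phi c P) :=
  Set.eq_of_subset_of_subset (range_subset_attractor hP hc0 hc1 hA)
    (attractor_subset_range hP hc0 hc1 hA)

lemma trm_shift (c : ℝ) (P σ k) :
    c • Lp P (trm c P (fun j => σ (j+1)) k) = trm c P σ (k+1) := by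
  rw [trm, trm, _root_.map_smul, smul_smul]
  have : Lp P ((Lp P ^ k) (vtx (σ (k+1)))) = (Lp P ^ (k+1)) (vtx (σ (k+1))) := by
    rw [← Module.End.mul_apply, ← pow_succ']
  rw [this, pow_succ]
  ring_nf

lemma Phi_succ {P} (hP : P ∈ Matrix.specialOrthogonalGroup (Fin 3) ℝ) {c : ℝ}
    (hc0 : 0 < c) (hc1 : c < 1) (σ : ℕ → Fin 4) :
    Phi c P σ = fmap c P (σ 0) (Phi c P (fun k => σ (k+1))) := by
  set σ' : ℕ → Fin 4 := fun k => σ (k+1) with hσ'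
  have h1 : HasSum (trm c P σ') (Phi c P σ') := hasSum_trm hP hc0 hc1 σ'
  have Lc : E3 →L[ℝ] E3 := LinearMap.toContinuousLinearMap (Lp P)
  have h2 : HasSum (fun k => Lp P (trm c P σ' k)) (Lp P (Phi c P σ')) := by
    have := (LinearMap.toContinuousLinearMap (Lp P)).hasSum h1
    simpa using this
  have h3 : HasSum (fun k => c • Lp P (trm c P σ' k)) (c • Lp P (Phi c P σ')) := h2.const_smul c
  have hfe : (fun k => c • Lp P (trm c P σ' k)) = fun k => trm c P σ (k+1) :=
    funext (trm_shift c P σ)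
  rw [hfe] at h3
  have h5 : HasSum (trm c P σ) (c • Lp P (Phi c P σ') + ∑ i ∈ Finset.range 1, trm c P σ i) :=
    (hasSum_nat_add_iff 1).mp h3
  have h6 : Phi c P σ = c • Lp P (Phi c P σ') + trm c P σ 0 := by
    have := (hasSum_trm hP hc0 hc1 σ).unique h5
    simpa using this
  rw [h6]
  have : trm c P σ 0 = vtx (σ 0) := by simp [trm]
  rw [this]
  rfl

lemma continuous_Phi {P} (hP : P ∈ Matrix.specialOrthogonalGroup (Fin 3) ℝ) {c : ℝ}
    (hc0 : 0 < c) (hc1 : c < 1) : Continuous (Phi c P) := by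
  have hunif : TendstoUniformly (fun N (σ : ℕ → Fin 4) => ∑ k ∈ Finset.range N, trm c P σ k)
      (Phi c P) Filter.atTop := by
    rw [Metric.tendstoUniformly_iff]
    intro ε hε
    have hlim : Filter.Tendsto (fun n : ℕ => Real.sqrt 3 * c ^ n / (1 - c))
        Filter.atTop (nhds 0) := by
      have hp := tendsto_pow_atTop_nhds_zero_of_lt_one hc0.le hc1
      simpa using (hp.const_mul (Real.sqrt 3)).div_const (1 - c)
    have := hlim.eventually (eventually_lt_nhds hε)
    filter_upwards [this] with n hn σ
    rw [dist_eq_norm]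
    calc ‖Phi c P σ - ∑ k ∈ Finset.range n, trm c P σ k‖
        ≤ Real.sqrt 3 * c ^ n / (1 - c) := tail_bound hP hc0 hc1 σ n
      _ < ε := hn
  apply hunif.continuous
  apply Filter.Frequently.of_forall
  intro N
  apply continuous_finset_sum
  intro k _
  have : (fun σ : ℕ → Fin 4 => trm c P σ k)
      = (fun i : Fin 4 => c ^ k • (Lp P ^ k) (vtx i)) ∘ (fun σ => σ k) := rfl
  rw [this]
  exact continuous_of_discreteTopology.comp (continuous_apply k)

lemma isAttractor_range {P} (hP : P ∈ Matrix.specialOrthogonalGroup (Fin 3) ℝ) {c : ℝ}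
    (hc0 : 0 < c) (hc1 : c < 1) : IsAttractor c P (Set.range (Phi c P)) := by
  refine ⟨⟨Phi c P (fun _ => 0), ⟨_, rfl⟩⟩, isCompact_range (continuous_Phi hP hc0 hc1), ?_⟩
  apply Set.eq_of_subset_of_subset
  · rintro x ⟨σ, rfl⟩
    apply Set.mem_iUnion.mpr
    exact ⟨σ 0, Phi c P (fun k => σ (k+1)), ⟨_, rfl⟩, (Phi_succ hP hc0 hc1 σ).symm⟩
  · intro x hx
    obtain ⟨i, y, ⟨σ, rfl⟩, rfl⟩ := Set.mem_iUnion.mp hx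
    refine ⟨fun n => Nat.casesOn n i σ, ?_⟩
    rw [Phi_succ hP hc0 hc1]
    rfl

def W1 (c : ℝ) : Set E3 :=
  {x | ∃ u : ℕ → E3, (∀ k, u k ∈ Set.range vtx) ∧ HasSum (fun k => c ^ k • u k) x}

def W2 (c : ℝ) : Set E3 :=
  {x | ∃ u : ℕ → E3, (∀ k, (Even k → u k ∈ Set.range vtx) ∧
    (¬ Even k → u k ∈ Set.range vtx')) ∧ HasSum (fun k => c ^ k • u k) x}

lemma Lp_pow_zero_image (P : Matrix (Fin 3) (Fin 3) ℝ) (s : Set E3) :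
    ⇑(Lp P ^ 0) '' s = s := by
  have : ∀ x ∈ s, (Lp P ^ 0) x = id x := fun x _ => rfl
  rw [Set.image_congr this, Set.image_id]

lemma Lp_pow_image_P4 {P} (h4 : memP4 P) :
    ∀ k : ℕ, ⇑(Lp P ^ k) '' Set.range vtx = Set.range vtx := by
  intro k
  induction k with
  | zero => exact Lp_pow_zero_image P _
  | succ n ih => exact Lp_pow_image _ _ _ (memP4_imageV h4) ih

lemma Lp_pow_image_P6 {P} (h6 : memP6 P) (h4 : ¬ memP4 P) :
    ∀ k : ℕ, (Even k → ⇑(Lp P ^ k) '' Set.range vtx = Set.range vtx ∧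
            ⇑(Lp P ^ k) '' Set.range vtx' = Set.range vtx') ∧
         (¬ Even k → ⇑(Lp P ^ k) '' Set.range vtx = Set.range vtx' ∧
            ⇑(Lp P ^ k) '' Set.range vtx' = Set.range vtx) := by
  obtain ⟨hV, hV'⟩ := P6smP4_image h6 h4
  intro k
  induction k with
  | zero =>
    refine ⟨fun _ => ⟨Lp_pow_zero_image P _, Lp_pow_zero_image P _⟩, fun h => absurd Even.zero h⟩
  | succ n ih =>
    by_cases he : Even n
    · have hodd : ¬ Even (n + 1) := by simp [Nat.even_add_one, he]
      refine ⟨fun h => absurd h hodd, fun _ => ?_⟩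
      exact ⟨Lp_pow_image _ _ _ hV ((ih.1 he).2), Lp_pow_image _ _ _ hV' ((ih.1 he).1)⟩
    · have heven : Even (n + 1) := Nat.even_add_one.mpr he
      refine ⟨fun _ => ?_, fun h => absurd heven h⟩
      exact ⟨Lp_pow_image _ _ _ hV ((ih.2 he).2), Lp_pow_image _ _ _ hV' ((ih.2 he).1)⟩

lemma rangePhi_eq_W1 {P} (h4 : memP4 P) {c : ℝ} (hc0 : 0 < c) (hc1 : c < 1) :
    Set.range (Phi c P) = W1 c := by
  have hP := h4.1
  apply Set.eq_of_subset_of_subset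
  · rintro x ⟨σ, rfl⟩
    refine ⟨fun k => (Lp P ^ k) (vtx (σ k)), fun k => ?_, ?_⟩
    · rw [← Lp_pow_image_P4 h4 k]
      exact ⟨vtx (σ k), ⟨σ k, rfl⟩, rfl⟩
    · exact hasSum_trm hP hc0 hc1 σ
  · rintro x ⟨u, hu, hsum⟩
    have hchoice : ∀ k, ∃ j : Fin 4, (Lp P ^ k) (vtx j) = u k := by
      intro k
      have : u k ∈ (Lp P ^ k) '' Set.range vtx := by rw [Lp_pow_image_P4 h4 k]; exact hu k
      obtain ⟨v, ⟨j, rfl⟩, hv⟩ := this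
      exact ⟨j, hv⟩
    choose σ hσ using hchoice
    refine ⟨σ, ?_⟩
    have : trm c P σ = fun k => c ^ k • u k := by
      funext k; rw [trm, hσ k]
    exact ((hasSum_trm hP hc0 hc1 σ).unique (this ▸ hsum))

lemma rangePhi_eq_W2 {P} (h6 : memP6 P) (h4 : ¬ memP4 P) {c : ℝ} (hc0 : 0 < c) (hc1 : c < 1) :
    Set.range (Phi c P) = W2 c := by
  have hP := h6.1
  have halt := Lp_pow_image_P6 h6 h4
  apply Set.eq_of_subset_of_subset
  · rintro x ⟨σ, rfl⟩
    refine ⟨fun k => (Lp P ^ k) (vtx (σ k)), fun k => ⟨fun he => ?_, fun ho => ?_⟩, ?_⟩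
    · rw [← ((halt k).1 he).1]
      exact ⟨vtx (σ k), ⟨σ k, rfl⟩, rfl⟩
    · rw [← ((halt k).2 ho).1]
      exact ⟨vtx (σ k), ⟨σ k, rfl⟩, rfl⟩
    · exact hasSum_trm hP hc0 hc1 σ
  · rintro x ⟨u, hu, hsum⟩
    have hchoice : ∀ k, ∃ j : Fin 4, (Lp P ^ k) (vtx j) = u k := by
      intro k
      have : u k ∈ (Lp P ^ k) '' Set.range vtx := by
        by_cases he : Even k
        · rw [((halt k).1 he).1]; exact (hu k).1 he
        · rw [((halt k).2 he).1]; exact (hu k).2 he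
      obtain ⟨v, ⟨j, rfl⟩, hv⟩ := this
      exact ⟨j, hv⟩
    choose σ hσ using hchoice
    refine ⟨σ, ?_⟩
    have : trm c P σ = fun k => c ^ k • u k := by
      funext k; rw [trm, hσ k]
    exact ((hasSum_trm hP hc0 hc1 σ).unique (this ▸ hsum))

lemma pmem_W1 {c : ℝ} (hc0 : 0 < c) (hc1 : c < 1) : (1 - c)⁻¹ • vtx 0 ∈ W1 c := by
  refine ⟨fun _ => vtx 0, fun k => ⟨0, rfl⟩, ?_⟩
  exact (hasSum_geometric_of_lt_one hc0.le hc1).smul_const (vtx 0)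

lemma pnotmem_W2 {c : ℝ} (hc0 : 0 < c) (hc1 : c < 1) : (1 - c)⁻¹ • vtx 0 ∉ W2 c := by
  rintro ⟨u, hu, hsum⟩
  have hgeo := hasSum_geometric_of_lt_one hc0.le hc1
  have hsg : HasSum (fun k => c ^ k * ⟪vtx 0, u k⟫) ((1 - c)⁻¹ * 3) := by
    have h1 := (innerSL ℝ (vtx 0)).hasSum hsum
    have h2 : ∀ k, innerSL ℝ (vtx 0) (c ^ k • u k) = c ^ k * ⟪vtx 0, u k⟫ := by
      intro k
      simp [real_inner_smul_right]
    have h3 : (innerSL ℝ (vtx 0)) ((1 - c)⁻¹ • vtx 0) = (1 - c)⁻¹ * 3 := by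
      simp only [innerSL_apply_apply]
      rw [real_inner_smul_right, inn_self]
    rw [← h3]
    exact (funext h2) ▸ h1
  have h3 : HasSum (fun k : ℕ => 3 * c ^ k) (3 * (1 - c)⁻¹) := hgeo.mul_left 3
  have hdiff : HasSum (fun k => 3 * c ^ k - c ^ k * ⟪vtx 0, u k⟫)
      (3 * (1 - c)⁻¹ - (1 - c)⁻¹ * 3) := h3.sub hsg
  have hip_le : ∀ k, ⟪vtx 0, u k⟫ ≤ 3 := by
    intro k
    by_cases he : Even k
    · obtain ⟨j, hj⟩ := (hu k).1 he
      rcases inn_vv 0 j with h | h <;> rw [← hj] at * <;> rw [h] <;> norm_num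
    · obtain ⟨j, hj⟩ := (hu k).2 he
      rcases inn_vv' 0 j with h | h <;> rw [← hj] at * <;> rw [h] <;> norm_num
  have hterm_nonneg : ∀ k, 0 ≤ 3 * c ^ k - c ^ k * ⟪vtx 0, u k⟫ := by
    intro k
    have := hip_le k
    have hck : (0:ℝ) < c ^ k := pow_pos hc0 k
    nlinarith
  have hle := le_hasSum hdiff 1 (fun j _ => hterm_nonneg j)
  have h1odd : ¬ Even 1 := by decide
  obtain ⟨j, hj⟩ := (hu 1).2 h1odd
  have hip1 : ⟪vtx 0, u 1⟫ ≤ 1 := by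
    rcases inn_vv' 0 j with h | h <;> rw [← hj] at * <;> rw [h] <;> norm_num
  rw [show 3 * (1 - c)⁻¹ - (1 - c)⁻¹ * 3 = 0 by ring] at hle
  have : (0:ℝ) < 3 * c ^ 1 - c ^ 1 * ⟪vtx 0, u 1⟫ := by
    have : c ^ 1 = c := pow_one c
    nlinarith
  linarith

lemma memP4_one : memP4 (1 : Matrix (Fin 3) (Fin 3) ℝ) := by
  have hid : ⇑(toEuclideanLin (1 : Matrix (Fin 3) (Fin 3) ℝ)) = id := by
    rw [toEuclideanLin_one']; rfl
  exact ⟨one_mem _, by rw [hid, Set.image_id]⟩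

lemma memP6_one : memP6 (1 : Matrix (Fin 3) (Fin 3) ℝ) := by
  have hid : ⇑(toEuclideanLin (1 : Matrix (Fin 3) (Fin 3) ℝ)) = id := by
    rw [toEuclideanLin_one']; rfl
  exact ⟨one_mem _, by rw [hid, Set.image_id]⟩

def Prot : Matrix (Fin 3) (Fin 3) ℝ := ![![0,-1,0],![1,0,0],![0,0,1]]

lemma Prot_SO3 : Prot ∈ Matrix.specialOrthogonalGroup (Fin 3) ℝ := by
  rw [Matrix.mem_specialOrthogonalGroup_iff]
  constructor
  · rw [Matrix.mem_orthogonalGroup_iff']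
    ext i j
    fin_cases i <;> fin_cases j <;>
      simp only [Matrix.mul_apply, Fin.sum_univ_three, Matrix.star_eq_conjTranspose,
        Matrix.transpose_apply] <;>
      simp [Prot, Matrix.mul_apply, Fin.sum_univ_three, Matrix.one_apply,
        Matrix.star_eq_conjTranspose, Matrix.conjTranspose_apply, Matrix.vecHead,
        Matrix.vecTail]
  · rw [Matrix.det_fin_three]
    norm_num [Prot, Matrix.cons_val_two, Matrix.vecHead, Matrix.vecTail]

lemma Prot_apply (x : E3) : toEuclideanLin Prot x = !₂[-(x 1), x 0, x 2] := by
  ext i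
  fin_cases i <;>
    simp only [toEuclideanLin_apply] <;>
    simp [Prot, toEuclideanLin_apply, Matrix.mulVec, dotProduct, Fin.sum_univ_three]

lemma memP6_Prot : memP6 Prot := by
  refine ⟨Prot_SO3, ?_⟩
  apply Set.eq_of_subset_of_subset
  · rintro y ⟨x, hx, rfl⟩
    rw [Prot_apply]
    intro i
    have h0 := hx 0
    have h1 := hx 1
    have h2 := hx 2
    simp only [C0, Set.mem_Icc, Set.mem_setOf_eq] at h0 h1 h2 ⊢
    fin_cases i <;> simp <;> constructor <;> linarith [h0.1, h0.2, h1.1, h1.2, h2.1, h2.2]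
  · intro x hx
    refine ⟨!₂[x 1, -(x 0), x 2], ?_, ?_⟩
    · intro i
      have h0 := hx 0
      have h1 := hx 1
      have h2 := hx 2
      simp only [C0, Set.mem_Icc, Set.mem_setOf_eq] at h0 h1 h2 ⊢
      fin_cases i <;> simp <;> constructor <;> linarith [h0.1, h0.2, h1.1, h1.2, h2.1, h2.2]
    · rw [Prot_apply]
      ext i
      fin_cases i <;> simp

lemma not_memP4_Prot : ¬ memP4 Prot := by
  intro h4
  have h := memP4_imageV h4
  have : toEuclideanLin Prot (vtx 0) ∈ Set.range vtx := by
    rw [← h]; exact ⟨vtx 0, ⟨0, rfl⟩, rfl⟩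
  have heq : toEuclideanLin Prot (vtx 0) = vtx' 0 := by
    rw [Prot_apply]
    ext i
    fin_cases i <;> norm_num [vtx, vtx', Matrix.cons_val_two]
  rw [heq] at this
  obtain ⟨i, hi⟩ := this
  exact vtx_ne_vtx' i 0 hi

theorem two_attractors (c : ℝ) (hc : c ∈ Set.Ioo (0 : ℝ) 1) :
    (∀ P₁ P₂ : Matrix (Fin 3) (Fin 3) ℝ, memP4 P₁ → memP6 P₂ → ¬ memP4 P₂ →
      ∀ T O : Set E3, IsAttractor c P₁ T → IsAttractor c P₂ O →
        (1 - c)⁻¹ • vtx 0 ∈ T ∧ (1 - c)⁻¹ • vtx 0 ∉ O ∧ T ≠ O) ∧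
    {A : Set E3 | ∃ P : Matrix (Fin 3) (Fin 3) ℝ, memP6 P ∧ IsAttractor c P A}.ncard = 2 := by
  obtain ⟨hc0, hc1⟩ := hc
  have hW12 : W1 c ≠ W2 c := by
    intro h
    exact pnotmem_W2 hc0 hc1 (h ▸ pmem_W1 hc0 hc1)
  constructor
  · intro P₁ P₂ h4 h6 hn4 T O hT hO
    have hTW : T = W1 c :=
      (attractor_eq_range h4.1 hc0 hc1 hT).trans (rangePhi_eq_W1 h4 hc0 hc1)
    have hOW : O = W2 c :=
      (attractor_eq_range h6.1 hc0 hc1 hO).trans (rangePhi_eq_W2 h6 hn4 hc0 hc1)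
    refine ⟨hTW ▸ pmem_W1 hc0 hc1, hOW ▸ pnotmem_W2 hc0 hc1, ?_⟩
    rw [hTW, hOW]
    exact hW12
  · have hset : {A : Set E3 | ∃ P : Matrix (Fin 3) (Fin 3) ℝ, memP6 P ∧ IsAttractor c P A}
        = {W1 c, W2 c} := by
      ext A
      constructor
      · rintro ⟨P, h6, hA⟩
        by_cases h4 : memP4 P
        · left
          exact (attractor_eq_range h6.1 hc0 hc1 hA).trans (rangePhi_eq_W1 h4 hc0 hc1)
        · right
          exact (attractor_eq_range h6.1 hc0 hc1 hA).trans (rangePhi_eq_W2 h6 h4 hc0 hc1)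
      · rintro (rfl | rfl)
        · refine ⟨1, memP6_one, ?_⟩
          rw [← rangePhi_eq_W1 memP4_one hc0 hc1]
          exact isAttractor_range memP4_one.1 hc0 hc1
        · refine ⟨Prot, memP6_Prot, ?_⟩
          rw [← rangePhi_eq_W2 memP6_Prot not_memP4_Prot hc0 hc1]
          exact isAttractor_range Prot_SO3 hc0 hc1
    rw [hset]
    exact Set.ncard_pair hW12
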